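/- For a commutative ring A, the ring T(A) = A[x_a : a ∈ A]/(x_a²a − x_a, x_a a² − a : a ∈ A) is von Neumann regular, and the canonical map A → T(A) is an epimorphism of commutative rings. -/

import Mathlib

universe u

open MvPolynomial

namespace OlivierAux

variable {A : Type u} [CommRing A]

@[reducible] noncomputable def oI (A : Type u) [CommRing A] : Ideal (MvPolynomial A A) :=
  Ideal.span {p : MvPolynomial A A | ∃ a : A,
    p = X a ^ 2 * C a - X a ∨ p = X a * C (a ^ 2) - C a}

abbrev oQ (A : Type u) [CommRing A] := MvPolynomial A A ⧸ oI A

noncomputable def omk : MvPolynomial A A →+* oQ A := Ideal.Quotient.mk (oI A)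

noncomputable def oy (a : A) : oQ A := omk (X a)
noncomputable def oc (a : A) : oQ A := omk (C a)

lemma rel1 (a : A) : oy a ^ 2 * oc a = oy a := by
  have h : omk (X a ^ 2 * C a - X a) = (0 : oQ A) :=
    Ideal.Quotient.eq_zero_iff_mem.2 (Ideal.subset_span ⟨a, Or.inl rfl⟩)
  have := sub_eq_zero.mp (by simpa [map_sub] using h)
  simpa [oy, oc, map_mul, map_pow] using this

lemma rel2 (a : A) : oy a * oc a ^ 2 = oc a := by
  have h : omk (X a * C (a ^ 2) - C a) = (0 : oQ A) :=
    Ideal.Quotient.eq_zero_iff_mem.2 (Ideal.subset_span ⟨a, Or.inr rfl⟩)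
  have := sub_eq_zero.mp (by simpa [map_sub] using h)
  simpa [oy, oc, map_mul, map_pow] using this

def oReg (t : oQ A) : Prop := ∃ s, t = t * s * t

lemma oReg_c (a : A) : oReg (oc a) :=
  ⟨oy a, by have := rel2 a; linear_combination -this⟩

lemma oReg_y (a : A) : oReg (oy a) :=
  ⟨oc a, by have := rel1 a; linear_combination -this⟩

lemma oReg_mul {t t' : oQ A} (h : oReg t) (h' : oReg t') : oReg (t * t') := by
  obtain ⟨s, hs⟩ := h; obtain ⟨s', hs'⟩ := h'
  exact ⟨s * s', by linear_combination t' * hs + t ^ 2 * s * hs'⟩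

lemma oReg_one : oReg (1 : oQ A) := ⟨1, by ring⟩

lemma oReg_pow {t : oQ A} (h : oReg t) (n : ℕ) : oReg (t ^ n) := by
  induction n with
  | zero => simpa using oReg_one
  | succ n ih => rw [pow_succ]; exact oReg_mul ih h

lemma oReg_idem {e : oQ A} (he : e * e = e) : oReg e := ⟨1, by linear_combination -he⟩

lemma oReg_split {t e : oQ A} (he : e * e = e)
    (h1 : oReg (t * e)) (h2 : oReg (t * (1 - e))) : oReg t := by
  obtain ⟨s1, hs1⟩ := h1
  obtain ⟨s2, hs2⟩ := h2
  exact ⟨e * s1 + (1 - e) * s2, by linear_combination hs1 + hs2 + t ^ 2 * (s1 + s2) * he⟩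

lemma he_idem (a : A) : (oc a * oy a) * (oc a * oy a) = oc a * oy a := by
  linear_combination oy a * rel2 a

lemma one_sub_he_idem (a : A) :
    (1 - oc a * oy a) * (1 - oc a * oy a) = 1 - oc a * oy a := by
  linear_combination he_idem a

lemma pow_e (a : A) (n : ℕ) : (oy a * oc a) ^ n * (oc a * oy a) = oc a * oy a := by
  induction n with
  | zero => ring
  | succ n ih =>
    have h := he_idem a
    calc (oy a * oc a) ^ (n + 1) * (oc a * oy a)
        = (oy a * oc a) ^ n * ((oc a * oy a) * (oc a * oy a)) := by ring
      _ = (oy a * oc a) ^ n * (oc a * oy a) := by rw [h]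
      _ = oc a * oy a := ih

lemma y_mul_one_sub_e (a : A) : oy a * (1 - oc a * oy a) = 0 := by
  linear_combination -rel1 a

lemma monomial_mem_supported {s : Set A} {d : A →₀ ℕ} (h : ↑d.support ⊆ s) (c : A) :
    monomial d c ∈ supported A s := by
  by_cases hc : c = 0
  · rw [hc, monomial_zero]; exact zero_mem _
  · rw [mem_supported, vars_monomial hc]; exact h

lemma C_mem_supported (s : Set A) (a : A) : (C a : MvPolynomial A A) ∈ supported A s := by
  rw [← algebraMap_eq]; exact Subalgebra.algebraMap_mem _ a

/-- The decomposition property over the idempotent `oc a * oy a`. -/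
def Pp (a : A) (F : Finset A) (t : oQ A) : Prop :=
  ∃ (n : ℕ) (q r : MvPolynomial A A),
    q ∈ supported A (↑F : Set A) ∧ r ∈ supported A (↑F : Set A) ∧
    t * (oc a * oy a) * oc a ^ n = omk q * (oc a * oy a) ∧
    t * (1 - oc a * oy a) = omk r * (1 - oc a * oy a)

lemma Pp_zero (a : A) (F : Finset A) : Pp a F 0 :=
  ⟨0, 0, 0, zero_mem _, zero_mem _, by simp, by simp⟩

lemma Pp_add {a : A} {F : Finset A} {t1 t2 : oQ A} (h1 : Pp a F t1) (h2 : Pp a F t2) :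
    Pp a F (t1 + t2) := by
  obtain ⟨n1, q1, r1, hq1, hr1, he1, hf1⟩ := h1
  obtain ⟨n2, q2, r2, hq2, hr2, he2, hf2⟩ := h2
  refine ⟨n1 + n2, q1 * C a ^ n2 + q2 * C a ^ n1, r1 + r2,
    add_mem (mul_mem hq1 (pow_mem (C_mem_supported _ a) _))
      (mul_mem hq2 (pow_mem (C_mem_supported _ a) _)),
    add_mem hr1 hr2, ?_, ?_⟩
  · have key : (t1 + t2) * (oc a * oy a) * oc a ^ (n1 + n2)
        = (t1 * (oc a * oy a) * oc a ^ n1) * oc a ^ n2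
          + (t2 * (oc a * oy a) * oc a ^ n2) * oc a ^ n1 := by ring
    rw [key, he1, he2, map_add, map_mul, map_mul, map_pow, map_pow]
    show _ = (omk q1 * oc a ^ n2 + omk q2 * oc a ^ n1) * (oc a * oy a)
    ring
  · rw [add_mul, hf1, hf2, map_add]; ring

lemma Pp_monomial {a : A} {F : Finset A} {d : A →₀ ℕ}
    (hds : (↑d.support : Set A) ⊆ insert a (↑F : Set A)) (cc : A) :
    Pp a F (omk (monomial d cc)) := by
  classical
  set k := d a with hk
  set d' : A →₀ ℕ := d.erase a with hd'
  have hd's : (↑d'.support : Set A) ⊆ (↑F : Set A) := by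
    intro i hi
    simp only [hd', Finsupp.support_erase, Finset.coe_erase, Set.mem_diff,
      Finset.mem_coe, Set.mem_singleton_iff] at hi
    rcases hds (by exact_mod_cast hi.1) with h | h
    · exact absurd h hi.2
    · exact h
  have hsplit : monomial d cc = X a ^ k * monomial d' cc := by
    rw [X_pow_eq_monomial, monomial_mul, one_mul, hd', hk, Finsupp.single_add_erase]
  have homk : omk (monomial d cc) = oy a ^ k * omk (monomial d' cc) := by
    rw [hsplit, map_mul, map_pow]; rfl
  refine ⟨k, monomial d' cc, if k = 0 then monomial d' cc else 0,
    monomial_mem_supported hd's cc, ?_, ?_, ?_⟩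
  · split
    · exact monomial_mem_supported hd's cc
    · exact zero_mem _
  · rw [homk]
    calc oy a ^ k * omk (monomial d' cc) * (oc a * oy a) * oc a ^ k
        = omk (monomial d' cc) * ((oy a * oc a) ^ k * (oc a * oy a)) := by ring
      _ = omk (monomial d' cc) * (oc a * oy a) := by rw [pow_e]
  · rw [homk]
    by_cases hk0 : k = 0
    · rw [if_pos hk0, hk0, pow_zero, one_mul]
    · rw [if_neg hk0]
      obtain ⟨k', hkk⟩ := Nat.exists_eq_succ_of_ne_zero hk0
      rw [hkk]
      calc oy a ^ (k' + 1) * omk (monomial d' cc) * (1 - oc a * oy a)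
          = oy a ^ k' * omk (monomial d' cc) * (oy a * (1 - oc a * oy a)) := by ring
        _ = 0 := by rw [y_mul_one_sub_e]; ring
        _ = omk 0 * (1 - oc a * oy a) := by simp

lemma Pp_poly {a : A} {F : Finset A} {p : MvPolynomial A A}
    (hvars : (↑p.vars : Set A) ⊆ insert a (↑F : Set A)) : Pp a F (omk p) := by
  have hsum : omk p = ∑ d ∈ p.support, omk (monomial d (coeff d p)) := by
    conv_lhs => rw [as_sum p]
    rw [map_sum]
  rw [hsum]
  refine Finset.sum_induction _ (Pp a F) (fun _ _ h1 h2 => Pp_add h1 h2) (Pp_zero a F) ?_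
  intro d hd
  refine Pp_monomial ?_ _
  intro i hi
  exact hvars (by exact_mod_cast (mem_vars i).2 ⟨d, hd, by exact_mod_cast hi⟩)

lemma main (F : Finset A) : ∀ p ∈ supported A (↑F : Set A), oReg (omk p) := by
  classical
  induction F using Finset.induction_on with
  | empty =>
    intro p hp
    rw [Finset.coe_empty, supported_empty, Algebra.mem_bot] at hp
    obtain ⟨b, rfl⟩ := hp
    exact oReg_c b
  | @insert a F ha IH =>
    intro p hp
    have hvars : (↑p.vars : Set A) ⊆ insert a (↑F : Set A) := by
      have := mem_supported.mp hp
      simpa using this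
    obtain ⟨n, q, r, hq, hr, heq, hfq⟩ := Pp_poly hvars
    have hreg1 : oReg (omk p * (oc a * oy a)) := by
      have key : omk p * (oc a * oy a) = omk q * (oc a * oy a) * oy a ^ n := by
        calc omk p * (oc a * oy a)
            = omk p * ((oy a * oc a) ^ n * (oc a * oy a)) := by rw [pow_e]
          _ = (omk p * (oc a * oy a) * oc a ^ n) * oy a ^ n := by ring
          _ = omk q * (oc a * oy a) * oy a ^ n := by rw [heq]
      rw [key]
      exact oReg_mul (oReg_mul (IH q hq) (oReg_idem (he_idem a))) (oReg_pow (oReg_y a) n)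
    have hreg2 : oReg (omk p * (1 - oc a * oy a)) := by
      rw [hfq]
      exact oReg_mul (IH r hr) (oReg_idem (one_sub_he_idem a))
    exact oReg_split (he_idem a) hreg1 hreg2

lemma quasi_unique {T : Type u} [CommRing T] {α y z : T}
    (hu1 : y ^ 2 * α = y) (hu2 : y * α ^ 2 = α)
    (hv1 : z ^ 2 * α = z) (hv2 : z * α ^ 2 = α) : y = z := by
  have h1 : y = y * α * z := by
    calc y = y ^ 2 * α := hu1.symm
      _ = y ^ 2 * (z * α ^ 2) := by rw [hv2]
      _ = (y ^ 2 * α) * (α * z) := by ring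
      _ = y * (α * z) := by rw [hu1]
      _ = y * α * z := by ring
  have h2 : z = z * α * y := by
    calc z = z ^ 2 * α := hv1.symm
      _ = z ^ 2 * (y * α ^ 2) := by rw [hu2]
      _ = (z ^ 2 * α) * (α * y) := by ring
      _ = z * (α * y) := by rw [hv1]
      _ = z * α * y := by ring
  calc y = y * α * z := h1
    _ = z * α * y := by ring
    _ = z := h2.symm

end OlivierAux

open OlivierAux in
/-- Olivier's construction: for a commutative ring `A`, the ring
`T(A) = A[x_a : a ∈ A] / (x_a² a − x_a, x_a a² − a : a ∈ A)` is von Neumann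
regular and the canonical map `A → T(A)` is an epimorphism of commutative
rings. -/
theorem olivier_vonNeumannRegular_epi (A : Type u) [CommRing A] :
    letI I : Ideal (MvPolynomial A A) :=
      Ideal.span {p : MvPolynomial A A | ∃ a : A,
        p = X a ^ 2 * C a - X a ∨ p = X a * C (a ^ 2) - C a}
    (∀ t : MvPolynomial A A ⧸ I, ∃ s, t = t * s * t) ∧
      (∀ (T : Type u) [CommRing T] (g h : (MvPolynomial A A ⧸ I) →+* T),
        g.comp ((Ideal.Quotient.mk I).comp (C : A →+* MvPolynomial A A)) =
          h.comp ((Ideal.Quotient.mk I).comp (C : A →+* MvPolynomial A A)) → g = h) := by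
  constructor
  · intro t
    obtain ⟨p, rfl⟩ := Ideal.Quotient.mk_surjective t
    exact main p.vars p (mem_supported.2 subset_rfl)
  · intro T _ g h hgh
    have hC : ∀ b : A, g (omk (C b)) = h (omk (C b)) := fun b => RingHom.congr_fun hgh b
    apply Ideal.Quotient.ringHom_ext
    apply MvPolynomial.ringHom_ext
    · intro b
      exact hC b
    · intro a
      show g (omk (X a)) = h (omk (X a))
      have hr1g := congrArg g (rel1 a)
      have hr2g := congrArg g (rel2 a)
      have hr1h := congrArg h (rel1 a)
      have hr2h := congrArg h (rel2 a)
      simp only [map_mul, map_pow] at hr1g hr2g hr1h hr2h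
      rw [show h (oc a) = g (oc a) from (hC a).symm] at hr1h hr2h
      exact quasi_unique hr1g hr2g hr1h hr2h
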